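/- Suppose a crash-stop algorithm A satisfies a safety state property P that is not repairable through detours, and suppose every finite trace of the crash-recovery system is a subword (with matching first and last states) of some finite trace of A extendable to an infinite trace of A. Then the crash-recovery system satisfies P. -/

import Mathlib

/-- Concatenation of a finite word with an infinite word. -/
def catWord {A : Type*} (u : List A) (v : ℕ → A) : ℕ → A :=
  fun i => if h : i < u.length then u.get ⟨i, h⟩ else v (i - u.length)

/-- The finite prefix of length `n` of an infinite word. -/
def prefixOf {A : Type*} (w : ℕ → A) (n : ℕ) : List A :=
  List.ofFn (fun i : Fin n => w i)

/-- `P` is a safety property. -/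
def IsSafety {A : Type*} (P : Set (ℕ → A)) : Prop :=
  ∀ w ∉ P, ∃ n : ℕ, ∀ v : ℕ → A, catWord (prefixOf w n) v ∉ P

/-- Subword relation on infinite words. -/
def Subword {A : Type*} (u w : ℕ → A) : Prop :=
  ∃ f : ℕ → ℕ, StrictMono f ∧ ∀ i, u i = w (f i)

/-- `P` is not repairable through detours. -/
def DetourIrreparable {A : Type*} (P : Set (ℕ → A)) : Prop :=
  ∀ u w : ℕ → A, u ∉ P → u 0 = w 0 → Subword u w → w ∉ P

/-- Subword relation on finite words (via a strictly monotone re-indexing). -/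
def FinSubword {A : Type*} (u t : List A) : Prop :=
  ∃ f : ℕ → ℕ, StrictMono f ∧ ∀ i < u.length, u[i]? = t[f i]?

/-- Preservation of detour-irreparable safety properties: if every finite trace
of system `B` is a subword (with matching first and last states) of some finite
trace of system `A`, every finite trace of `A` extends to an infinite trace of
`A`, and `A` satisfies the detour-irreparable safety property `P`, then `B`
satisfies `P`. -/
theorem preservation_detour_irreparable {St : Type*}
    (AFin BFin : Set (List St)) (AInf BInf : Set (ℕ → St))
    (P : Set (ℕ → St)) (hsafe : IsSafety P) (hdet : DetourIrreparable P)
    (hprefB : ∀ w ∈ BInf, ∀ n : ℕ, prefixOf w n ∈ BFin)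
    (hlift : ∀ tB ∈ BFin, tB ≠ [] → ∃ tA ∈ AFin, FinSubword tB tA ∧
      tA.head? = tB.head? ∧ tA.getLast? = tB.getLast?)
    (hext : ∀ tA ∈ AFin, ∃ v : ℕ → St, catWord tA v ∈ AInf)
    (hA : ∀ ρ ∈ AInf, ρ ∈ P) :
    ∀ ρ ∈ BInf, ρ ∈ P := by
  intro ρ hρ
  by_contra hnP
  obtain ⟨n, hn⟩ := hsafe ρ hnP
  set m := max n 1 with hm
  have hm1 : 1 ≤ m := le_max_right _ _
  have hn' : ∀ v : ℕ → St, catWord (prefixOf ρ m) v ∉ P := by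
    rcases Nat.eq_zero_or_pos n with h0 | hpos
    · intro v hv
      apply hn (catWord (prefixOf ρ m) v)
      subst h0
      have heq : catWord (prefixOf ρ 0) (catWord (prefixOf ρ m) v)
          = catWord (prefixOf ρ m) v := by
        funext i; simp [catWord, prefixOf]
      rw [heq]; exact hv
    · have hmn : m = n := by omega
      rw [hmn]; exact hn
  set tB := prefixOf ρ m with htB
  have htBlen : tB.length = m := by simp [htB, prefixOf]
  have htBne : tB ≠ [] := by
    intro h
    have := congrArg List.length h
    simp [htBlen] at this
    omega
  obtain ⟨tA, htA, ⟨g, hgmono, hg⟩, hhead, -⟩ :=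
    hlift tB (by rw [htB]; exact hprefB ρ hρ m) htBne
  obtain ⟨v, hw⟩ := hext tA htA
  set w := catWord tA v with hwdef
  have hwP : w ∈ P := hA w hw
  have hglt : ∀ i < m, g i < tA.length := by
    intro i hi
    by_contra hge
    have h1 : tB[i]? = tA[g i]? := hg i (by omega)
    rw [List.getElem?_eq_getElem (by omega), List.getElem?_eq_none (by omega)] at h1
    exact Option.some_ne_none _ h1
  have hval : ∀ i (hi : i < m), w (g i) = tB.get ⟨i, by omega⟩ := by
    intro i hi
    have h1 : tB[i]? = tA[g i]? := hg i (by omega)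
    rw [List.getElem?_eq_getElem (by rw [htBlen]; exact hi),
        List.getElem?_eq_getElem (hglt i hi)] at h1
    have : w (g i) = tA.get ⟨g i, hglt i hi⟩ := by
      simp [hwdef, catWord, hglt i hi]
    rw [this, ← Option.some_inj]; simpa using h1.symm
  have htAlen : 0 < tA.length := lt_of_le_of_lt (Nat.zero_le _) (hglt 0 (by omega))
  set u : ℕ → St := catWord tB (fun i => w (tA.length + i)) with hu
  have huP : u ∉ P := hn' _
  set F : ℕ → ℕ := fun i => if i < m then g i else tA.length + (i - m) with hF
  have hFmono : StrictMono F := by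
    intro i j hij
    simp only [hF]
    by_cases hi : i < m <;> by_cases hj : j < m <;> simp [hi, hj]
    · exact hgmono hij
    · have : g i ≤ g (m - 1) := hgmono.monotone (by omega)
      have := hglt (m - 1) (by omega)
      omega
    · omega
    · omega
  have hsub : Subword u w := by
    refine ⟨F, hFmono, fun i => ?_⟩
    by_cases hi : i < m
    · have : u i = tB.get ⟨i, by omega⟩ := by
        simp [hu, catWord, htBlen, hi]
      rw [this, hF]
      simp only [hi, if_true]
      exact (hval i hi).symm
    · have h1 : u i = w (tA.length + (i - m)) := by
        simp [hu, catWord, htBlen, hi]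
      rw [h1, hF]
      simp [hi]
  have h00 : u 0 = w 0 := by
    have hu0 : u 0 = tB.get ⟨0, by omega⟩ := by
      simp only [hu, catWord]
      rw [dif_pos (by omega : 0 < tB.length)]
    have hw0 : w 0 = tA.get ⟨0, htAlen⟩ := by
      simp [hwdef, catWord, htAlen]
    have hh : tA[0]? = tB[0]? := by
      rw [← List.head?_eq_getElem?,
        ← List.head?_eq_getElem?]
      exact hhead
    rw [List.getElem?_eq_getElem htAlen, List.getElem?_eq_getElem (by omega)] at hh
    rw [hu0, hw0, ← Option.some_inj]; simpa using hh.symm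
  exact hdet u w huP h00 hsub hwP
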